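/- Let α > 2, λ > 0 and i_0 > 0 be real numbers. Then 2πλ ∫_{r=0}^{∞} ∫_{u=r}^{∞} 4(πλ)^2 r u e^{−πλ u^2} · ( i_0 u^2 / (α − 2) ) du dr = 4 i_0 / (α − 2). In particular, the mean of the uplink interference in the low-i_0 regime under minimum path loss association equals 4 i_0/(α−2) and is independent of the base station density λ. -/

import Mathlib

open MeasureTheory Real Set Filter

lemma pow_int_on (a : ℝ) (ha : 0 < a) (n : ℕ) (r : ℝ) (hr : 0 ≤ r) :
    IntegrableOn (fun u : ℝ => u ^ n * Real.exp (-(a * u ^ 2))) (Ioi r) := by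
  have h := (integrable_rpow_mul_exp_neg_mul_sq ha
    (lt_of_lt_of_le (by norm_num) (Nat.cast_nonneg n) : (-1:ℝ) < (n:ℝ))).integrableOn (s := Ioi r)
  refine h.congr_fun (fun u hu => ?_) measurableSet_Ioi
  have hu0 : 0 < u := lt_of_le_of_lt hr hu
  beta_reduce; rw [Real.rpow_natCast, neg_mul]

lemma inner_int (a : ℝ) (ha : 0 < a) (r : ℝ) (hr : 0 ≤ r) :
    ∫ u in Ioi r, u ^ 3 * Real.exp (-(a * u ^ 2))
      = (r ^ 2 / (2 * a) + 1 / (2 * a ^ 2)) * Real.exp (-(a * r ^ 2)) := by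
  have key := integral_Ioi_of_hasDerivAt_of_tendsto
    (f := fun u : ℝ => -(u ^ 2 / (2 * a) + 1 / (2 * a ^ 2)) * Real.exp (-(a * u ^ 2)))
    (f' := fun u : ℝ => u ^ 3 * Real.exp (-(a * u ^ 2))) (a := r) (m := 0)
    ?_ ?_ (pow_int_on a ha 3 r hr) ?_
  · rw [key]; ring
  · exact (Continuous.continuousWithinAt (by continuity))
  · intro x hx
    have h1 : HasDerivAt (fun u : ℝ => -(u ^ 2 / (2 * a) + 1 / (2 * a ^ 2)))
        (-(2 * x / (2 * a))) x := by
      have := ((hasDerivAt_pow 2 x).div_const (2 * a)).add_const (1 / (2 * a ^ 2))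
      exact this.neg.congr_deriv (by norm_num)
    have h2 : HasDerivAt (fun u : ℝ => Real.exp (-(a * u ^ 2)))
        (Real.exp (-(a * x ^ 2)) * (-(a * (2 * x)))) x := by
      have hin : HasDerivAt (fun u : ℝ => -(a * u ^ 2)) (-(a * (2 * x))) x := by
        have := ((hasDerivAt_pow 2 x).const_mul a).neg
        exact this.congr_deriv (by norm_num)
      exact (Real.hasDerivAt_exp _).comp x hin
    have := h1.mul h2
    refine this.congr_deriv ?_
    field_simp
    ring
  · have htop : Tendsto (fun u : ℝ => a * u ^ 2) atTop atTop :=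
      (tendsto_pow_atTop (by norm_num : 2 ≠ 0)).const_mul_atTop ha
    have h1 : Tendsto (fun u : ℝ => (a * u ^ 2) * Real.exp (-(a * u ^ 2))) atTop (nhds 0) := by
      have := (tendsto_pow_mul_exp_neg_atTop_nhds_zero 1).comp htop
      simpa [Function.comp_def] using this
    have h2 : Tendsto (fun u : ℝ => Real.exp (-(a * u ^ 2))) atTop (nhds 0) := by
      have := Real.tendsto_exp_neg_atTop_nhds_zero.comp htop
      simpa [Function.comp_def] using this
    have heq : ∀ u : ℝ, (-(1/(2*a^2))) * ((a * u ^ 2) * Real.exp (-(a * u ^ 2)))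
        + (-(1/(2*a^2))) * Real.exp (-(a * u ^ 2))
        = -(u ^ 2 / (2 * a) + 1 / (2 * a ^ 2)) * Real.exp (-(a * u ^ 2)) := by
      intro u; field_simp; ring
    have hlim : Tendsto (fun u : ℝ => (-(1/(2*a^2))) * ((a * u ^ 2) * Real.exp (-(a * u ^ 2)))
        + (-(1/(2*a^2))) * Real.exp (-(a * u ^ 2))) atTop
        (nhds ((-(1/(2*a^2))) * 0 + (-(1/(2*a^2))) * 0)) :=
      (h1.const_mul _).add (h2.const_mul _)
    rw [show (0:ℝ) = (-(1/(2*a^2))) * 0 + (-(1/(2*a^2))) * 0 by ring]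
    exact hlim.congr heq

lemma outer_int (a : ℝ) (ha : 0 < a) :
    ∫ r in Ioi (0:ℝ), r * ((r ^ 2 / (2 * a) + 1 / (2 * a ^ 2)) * Real.exp (-(a * r ^ 2)))
      = 1 / (2 * a ^ 3) := by
  have hint : IntegrableOn
      (fun r : ℝ => r * ((r ^ 2 / (2 * a) + 1 / (2 * a ^ 2)) * Real.exp (-(a * r ^ 2))))
      (Ioi (0:ℝ)) := by
    have h3 := (pow_int_on a ha 3 0 le_rfl).const_mul (1 / (2 * a))
    have h1 := (pow_int_on a ha 1 0 le_rfl).const_mul (1 / (2 * a ^ 2))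
    refine (h3.add h1).congr (Filter.Eventually.of_forall fun r => ?_)
    simp only [Pi.add_apply]
    ring
  have key := integral_Ioi_of_hasDerivAt_of_tendsto
    (f := fun r : ℝ => -(r ^ 2 / (4 * a ^ 2) + 1 / (2 * a ^ 3)) * Real.exp (-(a * r ^ 2)))
    (f' := fun r : ℝ => r * ((r ^ 2 / (2 * a) + 1 / (2 * a ^ 2)) * Real.exp (-(a * r ^ 2))))
    (a := 0) (m := 0) ?_ ?_ hint ?_
  · rw [key]; norm_num
  · exact (Continuous.continuousWithinAt (by continuity))
  · intro x hx
    have h1 : HasDerivAt (fun r : ℝ => -(r ^ 2 / (4 * a ^ 2) + 1 / (2 * a ^ 3)))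
        (-(2 * x / (4 * a ^ 2))) x := by
      have := ((hasDerivAt_pow 2 x).div_const (4 * a ^ 2)).add_const (1 / (2 * a ^ 3))
      exact this.neg.congr_deriv (by norm_num)
    have h2 : HasDerivAt (fun r : ℝ => Real.exp (-(a * r ^ 2)))
        (Real.exp (-(a * x ^ 2)) * (-(a * (2 * x)))) x := by
      have hin : HasDerivAt (fun r : ℝ => -(a * r ^ 2)) (-(a * (2 * x))) x := by
        have := ((hasDerivAt_pow 2 x).const_mul a).neg
        exact this.congr_deriv (by norm_num)
      exact (Real.hasDerivAt_exp _).comp x hin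
    have := h1.mul h2
    refine this.congr_deriv ?_
    field_simp
    ring
  · have htop : Tendsto (fun u : ℝ => a * u ^ 2) atTop atTop :=
      (tendsto_pow_atTop (by norm_num : 2 ≠ 0)).const_mul_atTop ha
    have h1 : Tendsto (fun u : ℝ => (a * u ^ 2) * Real.exp (-(a * u ^ 2))) atTop (nhds 0) := by
      have := (tendsto_pow_mul_exp_neg_atTop_nhds_zero 1).comp htop
      simpa [Function.comp_def] using this
    have h2 : Tendsto (fun u : ℝ => Real.exp (-(a * u ^ 2))) atTop (nhds 0) := by
      have := Real.tendsto_exp_neg_atTop_nhds_zero.comp htop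
      simpa [Function.comp_def] using this
    have heq : ∀ u : ℝ, (-(1/(4*a^3))) * ((a * u ^ 2) * Real.exp (-(a * u ^ 2)))
        + (-(1/(2*a^3))) * Real.exp (-(a * u ^ 2))
        = -(u ^ 2 / (4 * a ^ 2) + 1 / (2 * a ^ 3)) * Real.exp (-(a * u ^ 2)) := by
      intro u; field_simp; ring
    have hlim := (h1.const_mul (-(1/(4*a^3)))).add (h2.const_mul (-(1/(2*a^3))))
    rw [show (0:ℝ) = (-(1/(4*a^3))) * 0 + (-(1/(2*a^3))) * 0 by ring]
    exact hlim.congr heq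

/-- Mean of the uplink interference in the low-i₀ regime under minimum path
loss association: 2πλ times the integral of i₀u²/(α−2) against the joint pdf
of the nearest and second-nearest distances equals 4i₀/(α−2), independently
of the base station density λ (Remark 1). -/
theorem stmt_9 (α lam i0 : ℝ) (hα : 2 < α) (hlam : 0 < lam) (hi0 : 0 < i0) :
    2 * π * lam *
      (∫ r in Ioi (0:ℝ), ∫ u in Ioi r,
        4 * (π * lam) ^ 2 * r * u * Real.exp (-(π * lam * u ^ 2)) *
          (i0 * u ^ 2 / (α - 2)))
    = 4 * i0 / (α - 2) := by
  set a := π * lam with ha_def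
  have ha : 0 < a := mul_pos Real.pi_pos hlam
  have hα2 : α - 2 ≠ 0 := sub_ne_zero.mpr (ne_of_gt hα)
  have hinner : ∀ r ∈ Ioi (0:ℝ),
      (∫ u in Ioi r, 4 * a ^ 2 * r * u * Real.exp (-(a * u ^ 2)) * (i0 * u ^ 2 / (α - 2)))
      = (4 * a ^ 2 * i0 / (α - 2)) *
          (r * ((r ^ 2 / (2 * a) + 1 / (2 * a ^ 2)) * Real.exp (-(a * r ^ 2)))) := by
    intro r hr
    have : (∫ u in Ioi r, 4 * a ^ 2 * r * u * Real.exp (-(a * u ^ 2)) * (i0 * u ^ 2 / (α - 2)))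
        = ∫ u in Ioi r, (4 * a ^ 2 * r * i0 / (α - 2)) * (u ^ 3 * Real.exp (-(a * u ^ 2))) := by
      apply integral_congr_ae
      filter_upwards with u
      ring
    rw [this, integral_const_mul, inner_int a ha r (le_of_lt hr)]
    ring
  have houter : (∫ r in Ioi (0:ℝ), ∫ u in Ioi r,
        4 * a ^ 2 * r * u * Real.exp (-(a * u ^ 2)) * (i0 * u ^ 2 / (α - 2)))
      = (4 * a ^ 2 * i0 / (α - 2)) * (1 / (2 * a ^ 3)) := by
    rw [setIntegral_congr_fun measurableSet_Ioi hinner, integral_const_mul, outer_int a ha]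
  rw [houter]
  field_simp
  ring
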